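/- Let k be a field of characteristic 0 and n ≥ 1, and consider the Lie algebra t_{n+1} of infinitesimal braids with indices in {0, 1, …, n}. Let f be the Lie subalgebra of t_{n+1} generated by the elements t_{01}, …, t_{0n}. Then for every a ∈ t_{n+1} there exists a_0 ∈ f such that ⁅a, t_{01} + t_{02} + ⋯ + t_{0n}⁆ = ⁅a_0, t_{01} + t_{02} + ⋯ + t_{0n}⁆. -/

import Mathlib

/-!
The Lie algebra `t_N` of infinitesimal braids over a field `k` of characteristic 0:
quotient of the free Lie algebra on generators `T (i,j)` (for `i ≠ j` in `Fin N`)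
by the Lie ideal generated by the symmetry relations `T (i,j) - T (j,i)`, the
relations `⁅T (i,j), T (i,l) + T (j,l)⁆` for distinct `i, j, l` and
`⁅T (i,j), T (l,m)⁆` for distinct `i, j, k, l`.
-/

/-- Index type for the generators `T_{ij}` of `t_N`. -/
abbrev tGenIdx (N : ℕ) := {p : Fin N × Fin N // p.1 ≠ p.2}

/-- The free generator `T_{ij}`. -/
noncomputable def Tgen (k : Type) [Field k] [CharZero k] {N : ℕ} (i j : Fin N) (h : i ≠ j) :
    FreeLieAlgebra k (tGenIdx N) :=
  FreeLieAlgebra.of k ⟨(i, j), h⟩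

/-- The defining relations of the infinitesimal braid Lie algebra. -/
def tRels (k : Type) [Field k] [CharZero k] (N : ℕ) :
    Set (FreeLieAlgebra k (tGenIdx N)) :=
  { x |
    (∃ (i j : Fin N) (h : i ≠ j),
        x = Tgen k i j h - Tgen k j i h.symm) ∨
    (∃ (i j l : Fin N) (h₁ : i ≠ j) (h₂ : i ≠ l) (h₃ : j ≠ l),
        x = ⁅Tgen k i j h₁, Tgen k i l h₂ + Tgen k j l h₃⁆) ∨
    (∃ (i j l m : Fin N) (h₁ : i ≠ j) (h₂ : l ≠ m),
        i ≠ l ∧ i ≠ m ∧ j ≠ l ∧ j ≠ m ∧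
        x = ⁅Tgen k i j h₁, Tgen k l m h₂⁆) }

/-- The Lie ideal generated by the infinitesimal braid relations. -/
noncomputable def tIdeal (k : Type) [Field k] [CharZero k] (N : ℕ) :
    LieIdeal k (FreeLieAlgebra k (tGenIdx N)) :=
  LieSubmodule.lieSpan k _ (tRels k N)

/-- The Lie algebra `t_N` of infinitesimal braids. -/
abbrev tAlg (k : Type) [Field k] [CharZero k] (N : ℕ) :=
  FreeLieAlgebra k (tGenIdx N) ⧸ tIdeal k N

/-- The generator `t_{ab}` of `t_N` (junk value `0` if `a = b`). -/
noncomputable def tt (k : Type) [Field k] [CharZero k] {N : ℕ} (a b : Fin N) :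
    tAlg k N :=
  if h : a ≠ b then LieSubmodule.Quotient.mk' (tIdeal k N) (Tgen k a b h) else 0


namespace Lemma83

variable (k : Type) [Field k] [CharZero k] {N : ℕ}

/-- The quotient map as a morphism of Lie algebras. -/
noncomputable def tMk (N : ℕ) : FreeLieAlgebra k (tGenIdx N) →ₗ⁅k⁆ tAlg k N :=
  { (LieSubmodule.Quotient.mk' (tIdeal k N)).toLinearMap with
    map_lie' := fun {_ _} => rfl }

lemma tMk_apply (x : FreeLieAlgebra k (tGenIdx N)) :
    tMk k N x = LieSubmodule.Quotient.mk' (tIdeal k N) x := rfl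

lemma tMk_rel {x : FreeLieAlgebra k (tGenIdx N)} (hx : x ∈ tRels k N) : tMk k N x = 0 := by
  rw [tMk_apply, LieSubmodule.Quotient.mk_eq_zero]
  exact LieSubmodule.subset_lieSpan hx

lemma tt_eq (a b : Fin N) (h : a ≠ b) : tt k a b = tMk k N (Tgen k a b h) := by
  rw [tt, dif_pos h]; rfl

lemma tt_self (a : Fin N) : tt k a a = 0 := by
  rw [tt, dif_neg (by simp)]

lemma tt_symm (a b : Fin N) : tt k a b = tt k b a := by
  rcases eq_or_ne a b with rfl | h
  · rfl
  · rw [tt_eq k a b h, tt_eq k b a h.symm, ← sub_eq_zero, ← map_sub]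
    exact tMk_rel k (Or.inl ⟨a, b, h, rfl⟩)

lemma rel1 (i j l : Fin N) (h₁ : i ≠ j) (h₂ : i ≠ l) (h₃ : j ≠ l) :
    ⁅tt k i j, tt k i l + tt k j l⁆ = 0 := by
  rw [tt_eq k i j h₁, tt_eq k i l h₂, tt_eq k j l h₃, ← map_add, ← LieHom.map_lie]
  exact tMk_rel k (Or.inr (Or.inl ⟨i, j, l, h₁, h₂, h₃, rfl⟩))

lemma rel2 (i j l m : Fin N) (h₁ : i ≠ j) (h₂ : l ≠ m)
    (h3 : i ≠ l) (h4 : i ≠ m) (h5 : j ≠ l) (h6 : j ≠ m) :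
    ⁅tt k i j, tt k l m⁆ = 0 := by
  rw [tt_eq k i j h₁, tt_eq k l m h₂, ← LieHom.map_lie]
  exact tMk_rel k (Or.inr (Or.inr ⟨i, j, l, m, h₁, h₂, h3, h4, h5, h6, rfl⟩))

/-- Induction over `tAlg`: the generators `tt i j` generate it as a Lie algebra. -/
lemma tAlg_induction {p : tAlg k N → Prop}
    (mem : ∀ (i j : Fin N) (h : i ≠ j), p (tt k i j))
    (zero : p 0) (smul : ∀ (r : k) (x), p x → p (r • x))
    (add : ∀ x y, p x → p y → p (x + y))
    (lie : ∀ x y, p x → p y → p ⁅x, y⁆) (x : tAlg k N) : p x := by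
  let V : LieSubalgebra k (tAlg k N) :=
    { carrier := p
      add_mem' := fun hx hy => add _ _ hx hy
      zero_mem' := zero
      smul_mem' := fun r x hx => smul r x hx
      lie_mem' := fun hx hy => lie _ _ hx hy }
  obtain ⟨y, rfl⟩ := LieSubmodule.Quotient.surjective_mk' (N := tIdeal k N) x
  show tMk k N y ∈ V
  have hg : ∀ idx : tGenIdx N, tMk k N (FreeLieAlgebra.of k idx) ∈ V := by
    rintro ⟨⟨i, j⟩, h⟩
    have := mem i j h
    rwa [tt_eq k i j h] at this
  let F : FreeLieAlgebra k (tGenIdx N) →ₗ⁅k⁆ V :=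
    FreeLieAlgebra.lift k fun idx => ⟨tMk k N (FreeLieAlgebra.of k idx), hg idx⟩
  have hFe : V.incl.comp F = tMk k N := by
    apply FreeLieAlgebra.hom_ext
    intro idx
    simp [F]
  have : tMk k N y = ↑(F y) := by rw [← hFe]; rfl
  rw [this]
  exact (F y).2

section Main

variable (n : ℕ)

/-- The Lie subalgebra generated by `t_{01}, …, t_{0n}`. -/
noncomputable abbrev fsub : LieSubalgebra k (tAlg k (n + 1)) :=
  LieSubalgebra.lieSpan k (tAlg k (n + 1)) {x | ∃ i : Fin n, x = tt k 0 i.succ}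

/-- The element `t_{01} + ⋯ + t_{0n}`. -/
noncomputable abbrev Csum : tAlg k (n + 1) :=
  ∑ i : Fin n, tt k (0 : Fin (n + 1)) i.succ

variable {n}

lemma mem_f_gen (j : Fin (n + 1)) (hj : j ≠ 0) : tt k 0 j ∈ fsub k n := by
  obtain ⟨m, rfl⟩ := Fin.eq_succ_of_ne_zero hj
  exact LieSubalgebra.subset_lieSpan ⟨m, rfl⟩

lemma genf (i j : Fin (n + 1)) (l : Fin n) : ⁅tt k i j, tt k 0 l.succ⁆ ∈ fsub k n := by
  have hs0 : l.succ ≠ (0 : Fin (n + 1)) := Fin.succ_ne_zero l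
  have hsmem : tt k 0 l.succ ∈ fsub k n := LieSubalgebra.subset_lieSpan ⟨l, rfl⟩
  rcases eq_or_ne i j with rfl | hij
  · rw [tt_self, zero_lie]; exact zero_mem _
  rcases eq_or_ne i 0 with rfl | hi0
  · exact (fsub k n).lie_mem (mem_f_gen k j (Ne.symm hij)) hsmem
  rcases eq_or_ne j 0 with rfl | hj0
  · rw [tt_symm]
    exact (fsub k n).lie_mem (mem_f_gen k i hi0) hsmem
  have hfi := mem_f_gen k i hi0
  have hfj := mem_f_gen k j hj0
  rcases eq_or_ne l.succ i with hsi | hsi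
  · rw [hsi]
    have h := rel1 k 0 i j (Ne.symm hi0) (Ne.symm hj0) hij
    rw [lie_add] at h
    have h2 : ⁅tt k 0 i, tt k i j⁆ = -⁅tt k 0 i, tt k 0 j⁆ :=
      eq_neg_of_add_eq_zero_right h
    have h3 : ⁅tt k i j, tt k 0 i⁆ = ⁅tt k 0 i, tt k 0 j⁆ := by
      rw [← lie_skew, h2, neg_neg]
    rw [h3]
    exact (fsub k n).lie_mem hfi hfj
  rcases eq_or_ne l.succ j with hsj | hsj
  · rw [hsj, tt_symm k i j]
    have h := rel1 k 0 j i (Ne.symm hj0) (Ne.symm hi0) (Ne.symm hij)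
    rw [lie_add] at h
    have h2 : ⁅tt k 0 j, tt k j i⁆ = -⁅tt k 0 j, tt k 0 i⁆ :=
      eq_neg_of_add_eq_zero_right h
    have h3 : ⁅tt k j i, tt k 0 j⁆ = ⁅tt k 0 j, tt k 0 i⁆ := by
      rw [← lie_skew, h2, neg_neg]
    rw [h3]
    exact (fsub k n).lie_mem hfj hfi
  · rw [rel2 k i j 0 l.succ hij (Ne.symm hs0) hi0 (Ne.symm hsi) hj0 (Ne.symm hsj)]
    exact zero_mem _

lemma f_ideal (x : tAlg k (n + 1)) : ∀ y ∈ fsub k n, ⁅x, y⁆ ∈ fsub k n := by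
  induction x using tAlg_induction k with
  | mem i j h =>
    intro y hy
    refine (LieSubalgebra.lieSpan_induction (R := k)
      (p := fun y _ => y ∈ fsub k n ∧ ⁅tt k i j, y⁆ ∈ fsub k n) ?_ ?_ ?_ ?_ ?_ hy).2
    · rintro x ⟨l, rfl⟩
      exact ⟨LieSubalgebra.subset_lieSpan ⟨l, rfl⟩, genf k i j l⟩
    · simp only [lie_zero]
      exact ⟨zero_mem _, zero_mem _⟩
    · rintro x y - - ⟨hx1, hx2⟩ ⟨hy1, hy2⟩
      rw [lie_add]
      exact ⟨add_mem hx1 hy1, add_mem hx2 hy2⟩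
    · rintro r x - ⟨hx1, hx2⟩
      rw [lie_smul]
      exact ⟨(fsub k n).smul_mem r hx1, (fsub k n).smul_mem r hx2⟩
    · rintro x y - - ⟨hx1, hx2⟩ ⟨hy1, hy2⟩
      rw [leibniz_lie]
      exact ⟨(fsub k n).lie_mem hx1 hy1,
        add_mem ((fsub k n).lie_mem hx2 hy1) ((fsub k n).lie_mem hx1 hy2)⟩
  | zero => intro y hy; rw [zero_lie]; exact zero_mem _
  | smul r x hx => intro y hy; rw [smul_lie]; exact (fsub k n).smul_mem r (hx y hy)
  | add x y hx hy => intro z hz; rw [add_lie]; exact add_mem (hx z hz) (hy z hz)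
  | lie x y hx hy =>
    intro z hz
    rw [lie_lie]
    exact sub_mem (hx _ (hy z hz)) (hy _ (hx z hz))

lemma cent (i j : Fin (n + 1)) (hi : i ≠ 0) (hj : j ≠ 0) (hij : i ≠ j) :
    ⁅tt k i j, Csum k n⁆ = 0 := by
  obtain ⟨a, rfl⟩ := Fin.eq_succ_of_ne_zero hi
  obtain ⟨b, rfl⟩ := Fin.eq_succ_of_ne_zero hj
  have hab : a ≠ b := fun h => hij (by rw [h])
  rw [Csum]
  rw [show ⁅tt k a.succ b.succ, ∑ i : Fin n, tt k (0 : Fin (n+1)) i.succ⁆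
      = ∑ i : Fin n, ⁅tt k a.succ b.succ, tt k (0 : Fin (n+1)) i.succ⁆ from
    map_sum (LieAlgebra.ad k (tAlg k (n+1)) (tt k a.succ b.succ)) _ _]
  have hvan : ∀ x ∈ Finset.univ, x ∉ ({a, b} : Finset (Fin n)) →
      ⁅tt k a.succ b.succ, tt k 0 x.succ⁆ = 0 := by
    intro x _ hx
    simp only [Finset.mem_insert, Finset.mem_singleton, not_or] at hx
    exact rel2 k a.succ b.succ 0 x.succ hij (Ne.symm (Fin.succ_ne_zero x))
      (Fin.succ_ne_zero a) (fun h => hx.1 (Fin.succ_injective n h).symm)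
      (Fin.succ_ne_zero b) (fun h => hx.2 (Fin.succ_injective n h).symm)
  rw [← Finset.sum_subset (Finset.subset_univ ({a, b} : Finset (Fin n))) hvan,
    Finset.sum_pair hab, ← lie_add]
  have h := rel1 k a.succ b.succ 0 hij (Fin.succ_ne_zero a) (Fin.succ_ne_zero b)
  rwa [tt_symm k a.succ 0, tt_symm k b.succ 0] at h

end Main

end Lemma83

/-- Lemma 8.3 (Lie-algebra content): for every `a` in the infinitesimal braid Lie
algebra `t_{n+1}` (indices `{0, 1, …, n}`), there is an element `a₀` of the Lie
subalgebra `f` generated by `t_{01}, …, t_{0n}` with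
`⁅a, t_{01} + ⋯ + t_{0n}⁆ = ⁅a₀, t_{01} + ⋯ + t_{0n}⁆`. -/
theorem lemma_8_3 (k : Type) [Field k] [CharZero k] (n : ℕ) (hn : 1 ≤ n)
    (a : tAlg k (n + 1)) :
    ∃ a₀ ∈ LieSubalgebra.lieSpan k (tAlg k (n + 1))
        {x | ∃ i : Fin n, x = tt k 0 i.succ},
      ⁅a, ∑ i : Fin n, tt k (0 : Fin (n + 1)) i.succ⁆ =
        ⁅a₀, ∑ i : Fin n, tt k (0 : Fin (n + 1)) i.succ⁆ := by
  open Lemma83 in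
  have key : ∃ p ∈ fsub k n, ∃ q : tAlg k (n + 1), ⁅q, Csum k n⁆ = 0 ∧ a = p + q := by
    induction a using tAlg_induction k with
    | mem i j h =>
      rcases eq_or_ne i 0 with rfl | hi0
      · exact ⟨tt k 0 j, mem_f_gen k j (Ne.symm h), 0, by rw [zero_lie], (add_zero _).symm⟩
      rcases eq_or_ne j 0 with rfl | hj0
      · exact ⟨tt k 0 i, mem_f_gen k i hi0, 0, by rw [zero_lie],
          (tt_symm k i 0).trans (add_zero _).symm⟩
      · exact ⟨0, zero_mem _, tt k i j, cent k i j hi0 hj0 h, (zero_add _).symm⟩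
    | zero => exact ⟨0, zero_mem _, 0, by rw [zero_lie], (add_zero _).symm⟩
    | smul r x hx =>
      obtain ⟨p, hp, q, hq, rfl⟩ := hx
      exact ⟨r • p, (fsub k n).smul_mem r hp, r • q,
        by rw [smul_lie, hq, smul_zero], smul_add r p q⟩
    | add x y hx hy =>
      obtain ⟨p, hp, q, hq, rfl⟩ := hx
      obtain ⟨p', hp', q', hq', rfl⟩ := hy
      exact ⟨p + p', add_mem hp hp', q + q',
        by rw [add_lie, hq, hq', add_zero], by abel⟩
    | lie x y hx hy =>
      obtain ⟨p, hp, q, hq, rfl⟩ := hx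
      obtain ⟨p', hp', q', hq', rfl⟩ := hy
      have h1 : ⁅p, q'⁆ ∈ fsub k n := by
        rw [← lie_skew]
        exact neg_mem (f_ideal k q' p hp)
      refine ⟨⁅p, p'⁆ + ⁅p, q'⁆ + ⁅q, p'⁆,
        add_mem (add_mem ((fsub k n).lie_mem hp hp') h1) (f_ideal k q p' hp'),
        ⁅q, q'⁆, ?_, ?_⟩
      · rw [lie_lie, hq, hq', lie_zero, lie_zero, sub_zero]
      · rw [add_lie, lie_add, lie_add]; abel
  obtain ⟨p, hp, q, hq, rfl⟩ := key
  exact ⟨p, hp, by rw [add_lie, hq, add_zero]⟩
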